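/- Q-type ℓ₂ distributional eluder dimension bound for tabular MDPs: Let 𝒮 be a finite set of size SA, Ψ ⊆ {f : 𝒮 → [0,1]} any function class, and 𝒟 any set of probability distributions on 𝒮 (viewed as vectors in ℝ^{SA}). Then DE₂(Ψ, 𝒟, ε) ≤ 24·SA·log(1 + 4SA/ε²). -/

import Mathlib

open Matrix Finset

set_option linter.unusedSectionVars false
set_option maxHeartbeats 1600000

/-- Expectation of `f : S → ℝ` under a distribution `d` on a finite set `S`. -/
noncomputable def pexp {S : Type*} [Fintype S] (d : PMF S) (f : S → ℝ) : ℝ :=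
  ∑ s : S, (d s).toReal * f s

/-- `d 0, …, d (n-1)` is an `(ε', ℓ₂)`-eluder sequence for some common `ε' ≥ ε`,
with all elements drawn from `𝒟`. -/
def EluderSeq₂ {S : Type*} [Fintype S] (Ψ : Set (S → ℝ)) (𝒟 : Set (PMF S))
    (ε : ℝ) (n : ℕ) (d : ℕ → PMF S) : Prop :=
  (∀ i < n, d i ∈ 𝒟) ∧ ∃ ε' ≥ ε, ∀ t < n, ∃ ψ ∈ Ψ,
    ε' < |pexp (d t) ψ| ∧ ∑ i ∈ Finset.range t, |pexp (d i) ψ| ^ 2 ≤ ε' ^ 2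

/-- The `ℓ₂` distributional eluder dimension. -/
noncomputable def DEdim₂ {S : Type*} [Fintype S] (Ψ : Set (S → ℝ))
    (𝒟 : Set (PMF S)) (ε : ℝ) : ℕ∞ :=
  sSup {n : ℕ∞ | ∃ m : ℕ, n = (m : ℕ∞) ∧ ∃ d : ℕ → PMF S, EluderSeq₂ Ψ 𝒟 ε m d}

section Aux
variable {S : Type*} [Fintype S] [DecidableEq S]
lemma vecMulVec_mulVec' (v x : S → ℝ) : Matrix.vecMulVec v v *ᵥ x = (v ⬝ᵥ x) • v := by
  ext i
  simp [Matrix.mulVec, Matrix.vecMulVec_apply, dotProduct, Finset.mul_sum, mul_assoc,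
    mul_comm, mul_left_comm]

lemma quad_vecMulVec (v x : S → ℝ) : x ⬝ᵥ (Matrix.vecMulVec v v *ᵥ x) = (v ⬝ᵥ x) ^ 2 := by
  rw [vecMulVec_mulVec', dotProduct_smul, smul_eq_mul, dotProduct_comm x v, sq]

lemma posSemidef_vecMulVec (v : S → ℝ) : (Matrix.vecMulVec v v).PosSemidef := by
  rw [Matrix.posSemidef_iff_dotProduct_mulVec]
  constructor
  · ext i j
    simp [Matrix.conjTranspose_apply, Matrix.vecMulVec_apply, mul_comm]
  · intro x
    simp only [star_trivial]
    rw [quad_vecMulVec]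
    positivity

lemma symm_pair {M : Matrix S S ℝ} (hM : M.IsHermitian) (x y : S → ℝ) :
    x ⬝ᵥ M *ᵥ y = y ⬝ᵥ M *ᵥ x := by
  have hMt : Mᵀ = M := by
    have := hM.eq
    rwa [Matrix.conjTranspose_eq_transpose_of_trivial] at this
  rw [Matrix.dotProduct_mulVec, ← Matrix.mulVec_transpose, hMt, dotProduct_comm]

lemma cs_posdef {M : Matrix S S ℝ} (hM : M.PosDef) (v ψ : S → ℝ) :
    (v ⬝ᵥ ψ) ^ 2 ≤ (v ⬝ᵥ M⁻¹ *ᵥ v) * (ψ ⬝ᵥ M *ᵥ ψ) := by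
  by_cases hv : v = 0
  · subst hv; simp
  have hq : 0 < v ⬝ᵥ M⁻¹ *ᵥ v := by
    have := hM.inv.dotProduct_mulVec_pos hv
    simpa using this
  set q := v ⬝ᵥ M⁻¹ *ᵥ v with hqdef
  set c := (v ⬝ᵥ ψ) / q with hcdef
  set u := M⁻¹ *ᵥ v with hudef
  have hMu : M *ᵥ u = v := by
    rw [hudef, Matrix.mulVec_mulVec, Matrix.mul_nonsing_inv _ hM.det_pos.ne'.isUnit,
      Matrix.one_mulVec]
  have hexp : (0:ℝ) ≤ (ψ - c • u) ⬝ᵥ M *ᵥ (ψ - c • u) := by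
    by_cases h0 : ψ - c • u = 0
    · rw [h0]; simp
    · have := hM.dotProduct_mulVec_pos h0
      simpa using this.le
  have h1 : u ⬝ᵥ M *ᵥ ψ = v ⬝ᵥ ψ := by
    rw [symm_pair hM.isHermitian, hMu, dotProduct_comm]
  have h2 : u ⬝ᵥ v = q := by rw [hqdef, dotProduct_comm]
  have h3 : ψ ⬝ᵥ v = v ⬝ᵥ ψ := dotProduct_comm _ _
  have key : (ψ - c • u) ⬝ᵥ M *ᵥ (ψ - c • u)
      = ψ ⬝ᵥ M *ᵥ ψ - 2 * c * (v ⬝ᵥ ψ) + c ^ 2 * q := by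
    simp only [Matrix.mulVec_sub, Matrix.mulVec_smul, hMu, sub_dotProduct,
      smul_dotProduct, dotProduct_sub, dotProduct_smul, smul_eq_mul,
      h1, h2, h3]
    ring
  rw [key] at hexp
  rw [hcdef] at hexp
  have h4 : 0 ≤ ψ ⬝ᵥ M *ᵥ ψ - (v ⬝ᵥ ψ) ^ 2 / q := by
    have e1 : 2 * (v ⬝ᵥ ψ / q) * (v ⬝ᵥ ψ) = 2 * ((v ⬝ᵥ ψ) ^ 2 / q) := by
      field_simp
    have e2 : (v ⬝ᵥ ψ / q) ^ 2 * q = (v ⬝ᵥ ψ) ^ 2 / q := by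
      field_simp [pow_two]
    rw [e1, e2] at hexp
    linarith
  have := mul_le_mul_of_nonneg_left (sub_nonneg.mp h4 : (v ⬝ᵥ ψ) ^ 2 / q ≤ ψ ⬝ᵥ M *ᵥ ψ) hq.le
  calc (v ⬝ᵥ ψ) ^ 2 = q * ((v ⬝ᵥ ψ) ^ 2 / q) := by field_simp
    _ ≤ q * (ψ ⬝ᵥ M *ᵥ ψ) := this
lemma det_add_vecMulVec {M : Matrix S S ℝ} (hM : M.PosDef) (w : S → ℝ) :
    (M + Matrix.vecMulVec w w).det = M.det * (1 + w ⬝ᵥ M⁻¹ *ᵥ w) := by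
  rw [Matrix.vecMulVec_eq Unit, Matrix.det_add_replicateCol_mul_replicateRow hM.det_pos.ne'.isUnit]
  congr 1
  rw [Matrix.det_unique]
  have : M⁻¹ * Matrix.replicateCol Unit w = Matrix.replicateCol Unit (M⁻¹ *ᵥ w) := (Matrix.replicateCol_mulVec _ _).symm
  rw [Matrix.mul_assoc, this]
  simp [Matrix.replicateRow_mul_replicateCol_apply]

lemma trace_eq_sum_eigs {M : Matrix S S ℝ} (hM : M.IsHermitian) :
    M.trace = ∑ i, hM.eigenvalues i := by
  nth_rewrite 1 [hM.spectral_theorem]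
  rw [Unitary.conjStarAlgAut_apply, Matrix.trace_mul_cycle]
  have hU : (star (hM.eigenvectorUnitary : Matrix S S ℝ)) * (hM.eigenvectorUnitary : Matrix S S ℝ)
      = 1 := by
    exact Matrix.mem_unitaryGroup_iff'.mp (hM.eigenvectorUnitary).2
  rw [hU, Matrix.one_mul, Matrix.trace_diagonal]
  simp

lemma det_le_trace_pow {M : Matrix S S ℝ} (hM : M.PosSemidef) (hn : 0 < Fintype.card S) :
    M.det ≤ (M.trace / Fintype.card S) ^ (Fintype.card S) := by
  set n := Fintype.card S
  have hdet : M.det = ∏ i, hM.1.eigenvalues i := by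
    have := hM.1.det_eq_prod_eigenvalues
    simpa using this
  have htr : M.trace = ∑ i, hM.1.eigenvalues i := trace_eq_sum_eigs hM.1
  set μ := hM.1.eigenvalues
  have hμ : ∀ i, 0 ≤ μ i := hM.eigenvalues_nonneg
  have amgm := Real.geom_mean_le_arith_mean_weighted Finset.univ (fun _ => (n:ℝ)⁻¹) μ
    (fun i _ => by positivity)
    (by simp [Finset.card_univ]; field_simp; rfl)
    (fun i _ => hμ i)
  -- amgm : ∏ i, μ i ^ (n⁻¹:ℝ) ≤ ∑ i, n⁻¹ * μ i
  have hprod : (∏ i, μ i ^ ((n:ℝ)⁻¹)) ^ (n:ℕ) = ∏ i, μ i := by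
    rw [← Finset.prod_pow]
    congr 1
    ext i
    rw [← Real.rpow_natCast (μ i ^ ((n:ℝ)⁻¹)) n, ← Real.rpow_mul (hμ i),
      inv_mul_cancel₀ (by positivity), Real.rpow_one]
  have hsum : ∑ i, (n:ℝ)⁻¹ * μ i = M.trace / n := by
    rw [htr, ← Finset.mul_sum]; ring
  rw [hdet, ← hprod]
  rw [hsum] at amgm
  exact pow_le_pow_left₀ (Finset.prod_nonneg fun i _ => Real.rpow_nonneg (hμ i) _) amgm n
end Aux
lemma log_add_one_le_two_sqrt {u : ℝ} (hu : 0 ≤ u) :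
    Real.log (1 + u) ≤ 2 * Real.sqrt u := by
  have hs : 0 ≤ Real.sqrt u := Real.sqrt_nonneg u
  have h1 : (1 : ℝ) + u ≤ (1 + Real.sqrt u) ^ 2 := by
    have := Real.sq_sqrt hu
    nlinarith
  calc Real.log (1 + u) ≤ Real.log ((1 + Real.sqrt u) ^ 2) :=
        Real.log_le_log (by linarith) h1
    _ = 2 * Real.log (1 + Real.sqrt u) := by
        rw [Real.log_pow]; push_cast; ring
    _ ≤ 2 * Real.sqrt u := by
        have := Real.log_le_sub_one_of_pos (show (0:ℝ) < 1 + Real.sqrt u by linarith)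
        linarith

lemma log_three_halves : (1:ℝ)/3 ≤ Real.log (3/2) := by
  rw [Real.le_log_iff_exp_le (by norm_num)]
  by_contra h
  push_neg at h
  have h3 : Real.exp 1 = Real.exp (1/3) ^ (3:ℕ) := by
    rw [← Real.exp_nat_mul]; norm_num
  have he := Real.exp_one_lt_d9
  have hp : (3/2:ℝ)^(3:ℕ) < Real.exp (1/3) ^ (3:ℕ) := by
    apply pow_lt_pow_left₀ h (by norm_num)
    norm_num
  rw [← h3] at hp
  norm_num at hp
  linarith

lemma log_nine : Real.log 9 ≤ 2.25 := by
  rw [Real.log_le_iff_le_exp (by norm_num)]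
  have he := Real.exp_one_gt_d9
  have h14 : (1.25:ℝ) ≤ Real.exp (1/4) := by
    have := Real.add_one_le_exp (1/4 : ℝ); linarith
  have : Real.exp (2.25:ℝ) = Real.exp 1 * Real.exp 1 * Real.exp (1/4) := by
    rw [← Real.exp_add, ← Real.exp_add]; norm_num
  rw [this]
  nlinarith [Real.exp_pos (1/4:ℝ)]

lemma endgame {t N e2 : ℝ} (ht : 1 ≤ t) (hN : 1 ≤ N) (he2 : 0 < e2) (he2' : e2 ≤ 1)
    (h : t ≤ 3 * N * Real.log (1 + t / e2)) :
    t ≤ 24 * N * Real.log (1 + 4 * N / e2) := by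
  set L := Real.log (1 + 4 * N / e2) with hLdef
  have harg : (5:ℝ) ≤ 1 + 4 * N / e2 := by
    have : (4:ℝ) ≤ 4 * N / e2 := by
      rw [le_div_iff₀ he2]; nlinarith
    linarith
  have hL1 : 1 ≤ L := by
    rw [hLdef, Real.le_log_iff_exp_le (by linarith)]
    have := Real.exp_one_lt_d9
    linarith
  have hstep : ∀ x : ℝ, 0 ≤ x → Real.log (1 + x / e2) ≤ L + Real.log (1 + x / (4 * N)) := by
    intro x hx
    have hx4 : 0 ≤ x / (4 * N) := by positivity
    have hxe : 0 ≤ x / e2 := by positivity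
    have hprod : 1 + x / e2 ≤ (1 + 4 * N / e2) * (1 + x / (4 * N)) := by
      have e1 : 4 * N / e2 * (x / (4 * N)) = x / e2 := by
        field_simp
      nlinarith [mul_nonneg (show (0:ℝ) ≤ 4*N/e2 by positivity) hx4]
    calc Real.log (1 + x / e2) ≤ Real.log ((1 + 4 * N / e2) * (1 + x / (4 * N))) :=
          Real.log_le_log (by linarith) hprod
      _ = L + Real.log (1 + x / (4 * N)) := by
          rw [Real.log_mul (by linarith) (by linarith)]
  -- main bound with sqrt
  set s := Real.sqrt (t / (4 * N)) with hsdef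
  have hs0 : 0 ≤ s := Real.sqrt_nonneg _
  have hs2 : s ^ 2 = t / (4 * N) := Real.sq_sqrt (by positivity)
  have hmain : t ≤ 3 * N * L + 6 * N * s := by
    have h2 := hstep t (by linarith)
    have h3 := log_add_one_le_two_sqrt (show (0:ℝ) ≤ t / (4*N) by positivity)
    rw [← hsdef] at h3
    nlinarith
  by_cases hcase : 6 * N * s ≤ t / 2
  · have : t ≤ 6 * N * L := by linarith
    nlinarith
  · push_neg at hcase
    have ht36 : t < 36 * N := by
      have h4 : t ^ 2 / 4 < 36 * N ^ 2 * s ^ 2 := by nlinarith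
      rw [hs2] at h4
      have : 36 * N ^ 2 * (t / (4 * N)) = 9 * N * t := by field_simp; ring
      rw [this] at h4
      nlinarith
    have h5 : Real.log (1 + t / e2) ≤ Real.log (1 + 36 * N / e2) := by
      apply Real.log_le_log (by positivity)
      gcongr
    have h6 : Real.log (1 + 36 * N / e2) ≤ Real.log 9 + L := by
      have h7 : 1 + 36 * N / e2 ≤ 9 * (1 + 4 * N / e2) := by
        have : (9:ℝ) * (4 * N / e2) = 36 * N / e2 := by ring
        nlinarith [show (0:ℝ) ≤ 4*N/e2 by positivity]
      calc Real.log (1 + 36 * N / e2) ≤ Real.log (9 * (1 + 4 * N / e2)) :=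
            Real.log_le_log (by positivity) h7
        _ = Real.log 9 + L := by
            rw [Real.log_mul (by norm_num) (by linarith)]
    have h9 := log_nine
    nlinarith [h, h5, h6]

/-- Q-type `ℓ₂` distributional eluder dimension bound for tabular MDPs: for any
class `Ψ` of `[0,1]`-valued functions on a finite set `S` and any set `𝒟` of
distributions on `S`, `DE₂(Ψ, 𝒟, ε) ≤ 24·|S|·log(1 + 4|S|/ε²)`. -/
theorem tabular_eluder_bound {S : Type*} [Fintype S]
    (Ψ : Set (S → ℝ)) (𝒟 : Set (PMF S)) (ε : ℝ) (hε : 0 < ε)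
    (hΨ : ∀ f ∈ Ψ, ∀ s, f s ∈ Set.Icc (0 : ℝ) 1)
    (Ddim : ℕ) (hdim : DEdim₂ Ψ 𝒟 ε = (Ddim : ℕ∞)) :
    (Ddim : ℝ) ≤ 24 * (Fintype.card S) *
      Real.log (1 + 4 * (Fintype.card S) / ε ^ 2) := by
  classical
  have hRHS0 : 0 ≤ 24 * (Fintype.card S : ℝ) * Real.log (1 + 4 * (Fintype.card S) / ε ^ 2) := by
    have h0 : (0:ℝ) ≤ Real.log (1 + 4 * (Fintype.card S) / ε ^ 2) :=
      Real.log_nonneg (by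
        have : (0:ℝ) ≤ 4 * (Fintype.card S) / ε ^ 2 := by positivity
        linarith)
    positivity
  rcases Nat.eq_zero_or_pos Ddim with h0 | hT1
  · rw [h0]; simpa using hRHS0
  -- extract a sequence of length Ddim
  have hmem : ∃ d : ℕ → PMF S, EluderSeq₂ Ψ 𝒟 ε Ddim d := by
    have hlt : ((Ddim - 1 : ℕ) : ℕ∞) <
        sSup {n : ℕ∞ | ∃ m : ℕ, n = (m : ℕ∞) ∧ ∃ d : ℕ → PMF S, EluderSeq₂ Ψ 𝒟 ε m d} := by
      rw [show sSup {n : ℕ∞ | ∃ m : ℕ, n = (m : ℕ∞) ∧ ∃ d : ℕ → PMF S, EluderSeq₂ Ψ 𝒟 ε m d}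
        = DEdim₂ Ψ 𝒟 ε from rfl, hdim]
      exact_mod_cast Nat.sub_lt hT1 one_pos
    obtain ⟨a, ha, hlt'⟩ := lt_sSup_iff.mp hlt
    obtain ⟨m, rfl, dd, hd⟩ := ha
    have hle : (m : ℕ∞) ≤ (Ddim : ℕ∞) := by
      rw [← hdim]
      exact le_sSup ⟨m, rfl, dd, hd⟩
    have hm : m = Ddim := by
      have h1 : Ddim - 1 < m := by exact_mod_cast hlt'
      have h2 : m ≤ Ddim := by exact_mod_cast hle
      omega
    exact ⟨dd, hm ▸ hd⟩
  obtain ⟨d, hdmem, ε', hεε', hseq⟩ := hmem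
  set T := Ddim with hTdef
  set v : ℕ → S → ℝ := fun i s => ((d i) s).toReal with hvdef
  have hvnn : ∀ i s, 0 ≤ v i s := fun i s => ENNReal.toReal_nonneg
  have hvsum : ∀ i, ∑ s, v i s = 1 := by
    intro i
    have h1 : ∑' s, (d i) s = 1 := (d i).tsum_coe
    rw [tsum_fintype] at h1
    have h2 : (∑ s, (d i) s).toReal = ∑ s, v i s :=
      ENNReal.toReal_sum (fun a _ => (d i).apply_ne_top a)
    rw [h1] at h2
    simpa using h2.symm
  have hSne : Nonempty S := by
    by_contra h
    have hie : IsEmpty S := not_nonempty_iff.mp h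
    have := hvsum 0
    rw [Finset.univ_eq_empty, Finset.sum_empty] at this
    norm_num at this
  have hcard : 0 < Fintype.card S := Fintype.card_pos
  set n := Fintype.card S with hn
  have hvle : ∀ i s, v i s ≤ 1 := by
    intro i s
    calc v i s ≤ ∑ s', v i s' := Finset.single_le_sum (fun s' _ => hvnn i s') (Finset.mem_univ s)
      _ = 1 := hvsum i
  have hvsq : ∀ i, v i ⬝ᵥ v i ≤ 1 := by
    intro i
    calc v i ⬝ᵥ v i = ∑ s, v i s * v i s := rfl
      _ ≤ ∑ s, v i s := Finset.sum_le_sum (fun s _ =>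
          mul_le_of_le_one_right (hvnn i s) (hvle i s))
      _ = 1 := hvsum i
  have hpexp : ∀ i f, pexp (d i) f = v i ⬝ᵥ f := fun i f => rfl
  have hε'pos : 0 < ε' := lt_of_lt_of_le hε hεε'
  have hψsq : ∀ ψ ∈ Ψ, ψ ⬝ᵥ ψ ≤ (n : ℝ) := by
    intro ψ hψ
    calc ψ ⬝ᵥ ψ = ∑ s, ψ s * ψ s := rfl
      _ ≤ ∑ _s : S, (1:ℝ) := Finset.sum_le_sum (fun s _ =>
          mul_le_one₀ ((hΨ ψ hψ s).2) ((hΨ ψ hψ s).1) ((hΨ ψ hψ s).2))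
      _ = n := by simp [hn]
  -- ε' < 1
  have hε'1 : ε' < 1 := by
    obtain ⟨ψ0, hψ0, h1, _⟩ := hseq 0 hT1
    have habs : |pexp (d 0) ψ0| ≤ 1 := by
      rw [hpexp]
      have hnn : 0 ≤ v 0 ⬝ᵥ ψ0 := Finset.sum_nonneg fun s _ =>
        mul_nonneg (hvnn 0 s) ((hΨ ψ0 hψ0 s).1)
      rw [abs_of_nonneg hnn]
      calc v 0 ⬝ᵥ ψ0 = ∑ s, v 0 s * ψ0 s := rfl
        _ ≤ ∑ s, v 0 s := Finset.sum_le_sum (fun s _ =>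
            mul_le_of_le_one_right (hvnn 0 s) ((hΨ ψ0 hψ0 s).2))
        _ = 1 := hvsum 0
    linarith
  have hε1 : ε < 1 := lt_of_le_of_lt hεε' hε'1
  set lam := ε ^ 2 / n with hlamdef
  have hlampos : 0 < lam := by positivity
  set M : ℕ → Matrix S S ℝ := fun t =>
    Matrix.diagonal (fun _ => lam) + ∑ i ∈ Finset.range t, Matrix.vecMulVec (v i) (v i)
    with hMdef
  have hdiagPD : (Matrix.diagonal (fun _ : S => lam)).PosDef :=
    Matrix.PosDef.diagonal (fun _ => hlampos)
  have hsumPSD : ∀ t, (∑ i ∈ Finset.range t, Matrix.vecMulVec (v i) (v i)).PosSemidef := by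
    intro t
    induction t with
    | zero => simpa using Matrix.PosSemidef.zero
    | succ k ih =>
      rw [Finset.sum_range_succ]
      exact ih.add (posSemidef_vecMulVec _)
  have hMPD : ∀ t, (M t).PosDef := fun t => hdiagPD.add_posSemidef (hsumPSD t)
  have hMsucc : ∀ k, M (k + 1) = M k + Matrix.vecMulVec (v k) (v k) := by
    intro k
    simp only [hMdef]
    rw [Finset.sum_range_succ, add_assoc]
  have hquaddiag : ∀ x : S → ℝ, x ⬝ᵥ (Matrix.diagonal (fun _ : S => lam)) *ᵥ x
      = lam * (x ⬝ᵥ x) := by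
    intro x
    simp only [dotProduct, Matrix.mulVec_diagonal, Finset.mul_sum]
    exact Finset.sum_congr rfl fun s _ => by ring
  have hquad : ∀ t (x : S → ℝ), x ⬝ᵥ (M t) *ᵥ x
      = lam * (x ⬝ᵥ x) + ∑ i ∈ Finset.range t, (v i ⬝ᵥ x) ^ 2 := by
    intro t x
    induction t with
    | zero => simp only [hMdef, Finset.range_zero, Finset.sum_empty, add_zero]; exact hquaddiag x
    | succ k ih =>
      rw [hMsucc k, Matrix.add_mulVec, dotProduct_add, ih, quad_vecMulVec,
        Finset.sum_range_succ]
      ring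
  -- key step : inverse quadratic form large
  have hq : ∀ t < T, (1:ℝ)/2 < v t ⬝ᵥ (M t)⁻¹ *ᵥ v t := by
    intro t ht
    obtain ⟨ψ, hψΨ, hbig, hsmall⟩ := hseq t ht
    rw [hpexp] at hbig
    have hsm : ∑ i ∈ Finset.range t, (v i ⬝ᵥ ψ) ^ 2 ≤ ε' ^ 2 := by
      calc ∑ i ∈ Finset.range t, (v i ⬝ᵥ ψ) ^ 2
          = ∑ i ∈ Finset.range t, |pexp (d i) ψ| ^ 2 := by
            refine Finset.sum_congr rfl fun i _ => ?_
            rw [hpexp, sq_abs]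
        _ ≤ ε' ^ 2 := hsmall
    have hMψ : ψ ⬝ᵥ (M t) *ᵥ ψ ≤ 2 * ε' ^ 2 := by
      rw [hquad]
      have h1 : lam * (ψ ⬝ᵥ ψ) ≤ ε ^ 2 := by
        calc lam * (ψ ⬝ᵥ ψ) ≤ lam * n := by
              exact mul_le_mul_of_nonneg_left (hψsq ψ hψΨ) hlampos.le
          _ = ε ^ 2 := by
              rw [hlamdef]; field_simp
      have hee : ε ^ 2 ≤ ε' ^ 2 := by nlinarith
      linarith
    have hcs := cs_posdef (hMPD t) (v t) ψ
    have hb2 : ε' ^ 2 < (v t ⬝ᵥ ψ) ^ 2 := by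
      have := pow_lt_pow_left₀ hbig hε'pos.le (n := 2) (two_ne_zero)
      rwa [sq_abs] at this
    have hqnn : 0 ≤ v t ⬝ᵥ (M t)⁻¹ *ᵥ v t := by
      have := (hMPD t).inv.posSemidef.dotProduct_mulVec_nonneg (v t)
      simpa using this
    nlinarith [mul_le_mul_of_nonneg_left hMψ hqnn]
  -- determinant lower bound
  have hdetlb : ∀ t ≤ T, lam ^ n * (3/2) ^ t ≤ (M t).det := by
    intro t
    induction t with
    | zero =>
      intro _
      simp only [hMdef, Finset.range_zero, Finset.sum_empty, add_zero, pow_zero, mul_one]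
      rw [Matrix.det_diagonal]
      simp [hn]
    | succ k ih =>
      intro hk1
      have hk : k < T := hk1
      have ihk := ih hk.le
      rw [hMsucc k, det_add_vecMulVec (hMPD k)]
      have hqk := hq k hk
      have hdetpos := (hMPD k).det_pos
      have h32 : (3/2 : ℝ) ≤ 1 + v k ⬝ᵥ (M k)⁻¹ *ᵥ v k := by linarith
      calc lam ^ n * (3/2) ^ (k+1) = (lam ^ n * (3/2) ^ k) * (3/2) := by ring
        _ ≤ (M k).det * (1 + v k ⬝ᵥ (M k)⁻¹ *ᵥ v k) :=
            mul_le_mul ihk h32 (by norm_num) hdetpos.le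
  -- trace bound
  have htr_eq : (M T).trace = lam * n + ∑ i ∈ Finset.range T, (v i ⬝ᵥ v i) := by
    have h1 : (Matrix.diagonal (fun _ : S => lam)).trace = lam * n := by
      rw [Matrix.trace_diagonal]
      simp [hn, mul_comm]
    have h2 : ∀ i : ℕ, (Matrix.vecMulVec (v i) (v i)).trace = v i ⬝ᵥ v i := by
      intro i
      simp [Matrix.trace, Matrix.diag, Matrix.vecMulVec_apply, dotProduct]
    simp only [hMdef]
    rw [Matrix.trace_add, Matrix.trace_sum, h1]
    rw [Finset.sum_congr rfl fun i _ => h2 i]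
  have htrace : (M T).trace ≤ lam * n + T := by
    rw [htr_eq]
    have : ∑ i ∈ Finset.range T, (v i ⬝ᵥ v i) ≤ ∑ _i ∈ Finset.range T, (1:ℝ) :=
      Finset.sum_le_sum fun i _ => hvsq i
    simp only [Finset.sum_const, Finset.card_range, nsmul_eq_mul, mul_one] at this
    linarith
  have htrace0 : 0 ≤ (M T).trace := by
    rw [htr_eq]
    have hs : (0:ℝ) ≤ ∑ i ∈ Finset.range T, (v i ⬝ᵥ v i) :=
      Finset.sum_nonneg fun i _ => Finset.sum_nonneg fun s _ =>
        mul_nonneg (hvnn i s) (hvnn i s)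
    have hl : (0:ℝ) ≤ lam * n := by positivity
    linarith
  -- determinant upper bound
  have hdetub : (M T).det ≤ (lam + T / n) ^ n := by
    calc (M T).det ≤ ((M T).trace / n) ^ n := det_le_trace_pow (hMPD T).posSemidef hcard
      _ ≤ (lam + T / n) ^ n := by
        apply pow_le_pow_left₀ (by positivity)
        rw [div_le_iff₀ (by positivity : (0:ℝ) < (n:ℝ))]
        calc (M T).trace ≤ lam * n + T := htrace
          _ = (lam + T / n) * n := by field_simp
  -- combine
  have hkey : lam ^ n * (3/2) ^ T ≤ (lam + T / n) ^ n := le_trans (hdetlb T le_rfl) hdetub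
  have hpow : ((3:ℝ)/2) ^ T ≤ (1 + T / ε ^ 2) ^ n := by
    have hexpand : (lam + (T:ℝ) / n) ^ n = lam ^ n * (1 + T / ε ^ 2) ^ n := by
      rw [← mul_pow]
      congr 1
      rw [hlamdef]
      field_simp
    rw [hexpand] at hkey
    have := pow_pos hlampos n
    exact le_of_mul_le_mul_left hkey this
  have hlog : (T:ℝ) * Real.log (3/2) ≤ n * Real.log (1 + T / ε ^ 2) := by
    have h1 := Real.log_le_log (pow_pos (by norm_num : (0:ℝ) < 3/2) T) hpow
    rwa [Real.log_pow, Real.log_pow] at h1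
  have hTle : (T:ℝ) ≤ 3 * n * Real.log (1 + (T:ℝ) / ε ^ 2) := by
    have h32 := log_three_halves
    have hT0 : (0:ℝ) ≤ T := Nat.cast_nonneg T
    nlinarith [mul_le_mul_of_nonneg_left h32 hT0]
  have := endgame (t := (T:ℝ)) (N := (n:ℝ)) (e2 := ε ^ 2)
    (by exact_mod_cast hT1) (by exact_mod_cast hcard) (by positivity) (by nlinarith) hTle
  exact this
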